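/- arXiv:2112.00520 — 2 statements merged into one kernel-verified Lean document; each statement's English description precedes it below -/
import Mathlib

section
/- For m = 21: the set H²¹₍₁,₃₎ = {h ∈ (Z/21Z)^× : ⟨h⟩ + ⟨3h⟩ < 21} and H²¹₍₁,₁₎ = {h ∈ (Z/21Z)^× : 2⟨h⟩ < 21} satisfy: there exists a unit t ∈ (Z/21Z)^× with t · H²¹₍₁,₁₎ = H²¹₍₁,₃₎. -/
theorem stmt_15 :
    ∃ t : ZMod 21, IsUnit t ∧
      (fun x => t * x) '' {h : ZMod 21 | IsUnit h ∧ h.val + h.val < 21} =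
        {h : ZMod 21 | IsUnit h ∧ h.val + (3 * h).val < 21} := by
  refine ⟨1, isUnit_one, ?_⟩
  ext x
  simp only [Set.mem_image, Set.mem_setOf_eq, one_mul]
  constructor
  · rintro ⟨y, hy, rfl⟩; revert hy; revert y; decide
  · intro hx; exact ⟨x, by revert hx; revert x; decide, rfl⟩
end

section
/- For every integer k ≥ 1, setting m = 4k + 2: there exists a unit t ∈ (Z/mZ)^× such that t · {h ∈ (Z/mZ)^× : 2⟨h⟩ < m} = {h ∈ (Z/mZ)^× : ⟨h⟩ + ⟨kh⟩ < m}. -/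
theorem stmt_16 (k : ℕ) (hk : 1 ≤ k) :
    ∃ t : ZMod (4 * k + 2), IsUnit t ∧
      (fun x => t * x) ''
          {h : ZMod (4 * k + 2) | IsUnit h ∧ h.val + h.val < 4 * k + 2} =
        {h : ZMod (4 * k + 2) | IsUnit h ∧
          h.val + ((k : ZMod (4 * k + 2)) * h).val < 4 * k + 2} := by
  haveI : NeZero (4 * k + 2) := ⟨by omega⟩
  refine ⟨1, isUnit_one, ?_⟩
  have himg : (fun x : ZMod (4 * k + 2) => (1 : ZMod (4 * k + 2)) * x) = id := by
    funext x; simp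
  rw [himg, Set.image_id]
  refine Set.ext fun h => ?_
  simp only [Set.mem_setOf_eq]
  refine and_congr_right fun hu => ?_
  -- basic facts about v = h.val
  have hv : h.val < 4 * k + 2 := ZMod.val_lt h
  have hcop : Nat.Coprime h.val (4 * k + 2) := by
    have := ZMod.val_coe_unit_coprime hu.unit
    rwa [hu.unit_spec] at this
  have hodd : h.val % 2 = 1 := by
    rcases Nat.even_or_odd h.val with he | ho
    · exfalso
      have h2 : (2 : ℕ) ∣ Nat.gcd h.val (4 * k + 2) :=
        Nat.dvd_gcd he.two_dvd ⟨2 * k + 1, by ring⟩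
      rw [hcop.gcd_eq_one] at h2
      omega
    · exact Nat.odd_iff.mp ho
  have hne : h.val ≠ 2 * k + 1 := by
    intro he
    have hd : (2 * k + 1) ∣ Nat.gcd h.val (4 * k + 2) :=
      Nat.dvd_gcd (he ▸ dvd_rfl) ⟨2, by ring⟩
    rw [hcop.gcd_eq_one] at hd
    have := Nat.le_of_dvd one_pos hd
    omega
  -- val of k*h
  have hkh : ((k : ZMod (4 * k + 2)) * h).val = (k * h.val) % (4 * k + 2) := by
    have e : ((k * h.val : ℕ) : ZMod (4 * k + 2)) = (k : ZMod (4 * k + 2)) * h := by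
      push_cast [ZMod.natCast_val, ZMod.cast_id]
      ring
    rw [← e, ZMod.val_natCast]
  rw [hkh]
  set r := (k * h.val) % (4 * k + 2) with hrdef
  have hrlt : r < 4 * k + 2 := Nat.mod_lt _ (by omega)
  -- key congruence: 2*r + v ≡ 2k+1 mod (4k+2)
  have hveq : h.val ≡ 1 [MOD 2] := by
    show h.val % 2 = 1 % 2
    omega
  have h2 : (2 * k + 1) * h.val ≡ (2 * k + 1) * 1 [MOD (2 * k + 1) * 2] :=
    hveq.mul_left' (c := 2 * k + 1)
  have e1 : (2 * k + 1) * h.val = 2 * (k * h.val) + h.val := by ring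
  have e2 : (2 * k + 1) * 1 = 2 * k + 1 := by ring
  have e3 : (2 * k + 1) * 2 = 4 * k + 2 := by ring
  rw [e1, e2, e3] at h2
  have hr : 2 * r + h.val ≡ 2 * (k * h.val) + h.val [MOD 4 * k + 2] :=
    Nat.ModEq.add_right _ ((Nat.mod_modEq _ _).mul_left 2)
  have h5 : 2 * r + h.val ≡ 2 * k + 1 [MOD 4 * k + 2] := hr.trans h2
  have h6 : (2 * r + h.val) % (4 * k + 2) = 2 * k + 1 := by
    have h6' := h5
    rw [Nat.ModEq, Nat.mod_eq_of_lt (show 2 * k + 1 < 4 * k + 2 by omega)] at h6'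
    exact h6'
  have h7 := Nat.div_add_mod (2 * r + h.val) (4 * k + 2)
  rw [h6] at h7
  have h8 : (2 * r + h.val) / (4 * k + 2) < 3 :=
    (Nat.div_lt_iff_lt_mul (by omega)).mpr (by omega)
  set c := (2 * r + h.val) / (4 * k + 2) with hcdef
  interval_cases c <;> omega
end
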